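/- Let (G,𝓑) be a biased graph whose underlying graph G is a complete bipartite graph. If every circuit of G with exactly 4 vertices is balanced, then every circuit of G is balanced. -/

import Mathlib

open SimpleGraph

namespace Paper

variable {V : Type*}

/-- The edge set of a walk, as a set of edges. -/
def walkEdges {G : SimpleGraph V} {x y : V} (p : G.Walk x y) : Set (Sym2 V) :=
  {e | e ∈ p.edges}

/-- `C` is a circuit of `G`, i.e. the edge set of a cycle of `G`. -/
def IsCircuit (G : SimpleGraph V) (C : Set (Sym2 V)) : Prop :=
  ∃ (v : V) (w : G.Walk v v), w.IsCycle ∧ C = walkEdges w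

/-- The set of vertices covered by a set of edges. -/
def circVerts (C : Set (Sym2 V)) : Set V := {v | ∃ e ∈ C, v ∈ e}

/-- An edge set is nonspanning if it misses some vertex. -/
def Nonspanning (C : Set (Sym2 V)) : Prop := circVerts C ≠ Set.univ

/-- Three pairwise edge-disjoint and internally vertex-disjoint `x`-`y` paths,
forming a theta subgraph. -/
def IsThetaConfig (G : SimpleGraph V) {x y : V} (p₁ p₂ p₃ : G.Walk x y) : Prop :=
  x ≠ y ∧ p₁.IsPath ∧ p₂.IsPath ∧ p₃.IsPath ∧
  (∀ e, e ∈ p₁.edges → e ∉ p₂.edges) ∧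
  (∀ e, e ∈ p₁.edges → e ∉ p₃.edges) ∧
  (∀ e, e ∈ p₂.edges → e ∉ p₃.edges) ∧
  (∀ v, v ∈ p₁.support → v ∈ p₂.support → v = x ∨ v = y) ∧
  (∀ v, v ∈ p₁.support → v ∈ p₃.support → v = x ∨ v = y) ∧
  (∀ v, v ∈ p₂.support → v ∈ p₃.support → v = x ∨ v = y)

/-- No theta subgraph of `G` contains exactly two circuits of `B`: the three
circuits of a theta subgraph are the unions of pairs of its three paths. -/
def ThetaProperty (G : SimpleGraph V) (B : Set (Set (Sym2 V))) : Prop :=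
  ∀ ⦃x y : V⦄ (p₁ p₂ p₃ : G.Walk x y), IsThetaConfig G p₁ p₂ p₃ →
    ¬ ((walkEdges p₁ ∪ walkEdges p₂ ∈ B ∧ walkEdges p₁ ∪ walkEdges p₃ ∈ B ∧
          walkEdges p₂ ∪ walkEdges p₃ ∉ B) ∨
       (walkEdges p₁ ∪ walkEdges p₂ ∈ B ∧ walkEdges p₁ ∪ walkEdges p₃ ∉ B ∧
          walkEdges p₂ ∪ walkEdges p₃ ∈ B) ∨
       (walkEdges p₁ ∪ walkEdges p₂ ∉ B ∧ walkEdges p₁ ∪ walkEdges p₃ ∈ B ∧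
          walkEdges p₂ ∪ walkEdges p₃ ∈ B))

/-- `(G, B)` is a biased graph. -/
def IsBiased (G : SimpleGraph V) (B : Set (Set (Sym2 V))) : Prop :=
  (∀ C ∈ B, IsCircuit G C) ∧ ThetaProperty G B

/-- The subgraph of `G` induced on the vertex set `X` (kept on the same vertex type). -/
def inducedOn (G : SimpleGraph V) (X : Set V) : SimpleGraph V where
  Adj u v := G.Adj u v ∧ u ∈ X ∧ v ∈ X
  symm := ⟨fun u v h => ⟨h.1.symm, h.2.2, h.2.1⟩⟩
  loopless := ⟨fun u h => G.loopless.irrefl u h.1⟩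

/-- The gain of a walk with respect to a gain function `γ` (an antisymmetric
function recording an orientation together with a group labelling). -/
def walkGain {Γ : Type*} [Group Γ] (γ : V → V → Γ) {G : SimpleGraph V}
    {x y : V} (p : G.Walk x y) : Γ :=
  (p.darts.map fun d => γ d.toProd.1 d.toProd.2).prod

/-- `(G, B)` arises from a `Γ`-labelled graph: some orientation and `Γ`-labelling of `G`
(encoded as an antisymmetric gain function) whose balanced circuits are exactly `B`. -/
def ArisesFrom (G : SimpleGraph V) (B : Set (Set (Sym2 V))) (Γ : Type*) [Group Γ] : Prop :=
  ∃ γ : V → V → Γ, (∀ u v, γ u v * γ v u = 1) ∧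
    ∀ (v : V) (w : G.Walk v v), w.IsCycle → (walkEdges w ∈ B ↔ walkGain γ w = 1)

/-- `(G, B)` arises from a `Γ`-labelled graph for some finite cyclic group `Γ`. -/
def ArisesFromFiniteCyclic (G : SimpleGraph V) (B : Set (Set (Sym2 V))) : Prop :=
  ∃ (Γ : Type) (instΓ : Group Γ), Finite Γ ∧ (letI := instΓ; IsCyclic Γ ∧ ArisesFrom G B Γ)

/-- The edge set of the cycle visiting the entries of the list `L` in cyclic order. -/
def cycEdges (L : List V) : Set (Sym2 V) :=
  {e | ∃ i : Fin L.length,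
    e = s(L.get i, L.get ⟨(i.val + 1) % L.length, Nat.mod_lt _ i.pos⟩)}

section Ordered

variable [LinearOrder V]

/-- The edge set `{v₁v₂, v₂v₃, v₃v₄, v₄v₁}` of a 4-circuit. -/
def Circ4 (v₁ v₂ v₃ v₄ : V) : Set (Sym2 V) := {s(v₁, v₂), s(v₂, v₃), s(v₃, v₄), s(v₄, v₁)}

/-- A 1324-circuit: the canonical ordering `v₁,v₂,v₃,v₄` satisfies `v₁<v₃<v₂<v₄`. -/
def Is1324 (C : Set (Sym2 V)) : Prop :=
  ∃ v₁ v₂ v₃ v₄ : V, v₁ < v₃ ∧ v₃ < v₂ ∧ v₂ < v₄ ∧ C = Circ4 v₁ v₂ v₃ v₄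

/-- A 1243-circuit: the canonical ordering `v₁,v₂,v₃,v₄` satisfies `v₁<v₂<v₄<v₃`. -/
def Is1243 (C : Set (Sym2 V)) : Prop :=
  ∃ v₁ v₂ v₃ v₄ : V, v₁ < v₂ ∧ v₂ < v₄ ∧ v₄ < v₃ ∧ C = Circ4 v₁ v₂ v₃ v₄

/-- A circuit is oscillating if every vertex is either below both of its neighbours
in the circuit or above both of them. -/
def Oscillating (C : Set (Sym2 V)) : Prop :=
  ∀ ⦃v a b : V⦄, s(v, a) ∈ C → s(v, b) ∈ C → a ≠ b → (v < a ∧ v < b) ∨ (a < v ∧ b < v)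

/-- The number of increasing steps of a walk minus the number of decreasing steps;
for a cycle walk `w` this is `δ₀` of the corresponding circuit, and `(walkDelta w).natAbs`
is the parameter `δ`. -/
def walkDelta {G : SimpleGraph V} {x y : V} (p : G.Walk x y) : ℤ :=
  ((p.darts.filter fun d => d.toProd.1 < d.toProd.2).length : ℤ) -
  ((p.darts.filter fun d => d.toProd.2 < d.toProd.1).length : ℤ)

/-- The gain of a walk with respect to the edge labelling `γ` and the orientation of
the complete graph in which each edge is oriented from its smaller end to its larger end. -/
def upGain {Γ : Type*} [Group Γ] (γ : Sym2 V → Γ) {G : SimpleGraph V}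
    {x y : V} (p : G.Walk x y) : Γ :=
  (p.darts.map fun d =>
    if d.toProd.1 < d.toProd.2 then γ s(d.toProd.1, d.toProd.2)
    else (γ s(d.toProd.1, d.toProd.2))⁻¹).prod

/-- `T` is the edge set of a theta subgraph of `G`. -/
def IsTheta (G : SimpleGraph V) (T : Set (Sym2 V)) : Prop :=
  ∃ (x y : V) (p₁ p₂ p₃ : G.Walk x y), IsThetaConfig G p₁ p₂ p₃ ∧
    T = walkEdges p₁ ∪ walkEdges p₂ ∪ walkEdges p₃

/-- Adjacency in the graph `Ω(G)`: a theta subgraph contains both circuits together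
with a 1243- or 1324-circuit. -/
def OmegaAdj (G : SimpleGraph V) (C₁ C₂ : Set (Sym2 V)) : Prop :=
  C₁ ≠ C₂ ∧ ∃ T, IsTheta G T ∧ C₁ ⊆ T ∧ C₂ ⊆ T ∧ ∃ D, (Is1243 D ∨ Is1324 D) ∧ D ⊆ T

/-- The graph `Ω(G)` on the nonspanning circuits of `G`. -/
def Omega (G : SimpleGraph V) :
    SimpleGraph {C : Set (Sym2 V) // IsCircuit G C ∧ Nonspanning C} where
  Adj C₁ C₂ := OmegaAdj G C₁.1 C₂.1
  symm := by
    refine ⟨?_⟩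
    rintro C₁ C₂ ⟨hne, T, hT, h1, h2, hD⟩
    exact ⟨hne.symm, T, hT, h2, h1, hD⟩
  loopless := by
    refine ⟨?_⟩
    rintro C ⟨hne, -⟩
    exact hne rfl

/-- Two circuits are similar if the order-preserving bijection between their vertex
sets carries one to the other. -/
def Similar (C₁ C₂ : Set (Sym2 V)) : Prop :=
  ∃ φ : V → V, Set.BijOn φ (circVerts C₁) (circVerts C₂) ∧
    StrictMonoOn φ (circVerts C₁) ∧ C₂ = Sym2.map φ '' C₁

end Ordered

/-- The 4-uniform Ramsey property for `N` with target sizes `a, b, c, d`. -/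
def HasRamsey4 (N a b c d : ℕ) : Prop :=
  ∀ χ : Finset (Fin N) → Fin 4, ∃ (i : Fin 4) (X : Finset (Fin N)),
    X.card = ![a, b, c, d] i ∧ ∀ Q ⊆ X, Q.card = 4 → χ Q = i

/-- The 4-colour Ramsey number for 4-uniform hypergraphs. -/
noncomputable def R4 (a b c d : ℕ) : ℕ := sInf {N | HasRamsey4 N a b c d}

end Paper

namespace Paper


section Helpers

open SimpleGraph Walk

variable {α β : Type}

/-- The side of a vertex of a complete bipartite graph, in `ZMod 2`. -/
private def bside (x : α ⊕ β) : ZMod 2 := Sum.elim (fun _ => 0) (fun _ => 1) x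

private lemma adj_of_bside {x y : α ⊕ β} (h : bside x + bside y = 1) :
    (completeBipartiteGraph α β).Adj x y := by
  cases x <;> cases y <;> simp [bside] at h ⊢ <;> exact absurd h (by decide)

private lemma parity_walk {x y : α ⊕ β} (p : (completeBipartiteGraph α β).Walk x y) :
    (p.length : ZMod 2) = bside x + bside y := by
  induction p with
  | nil => simp [CharTwo.add_self_eq_zero]
  | cons h q ih =>
    rename_i a b c
    have hab : bside a + bside b = 1 := by
      cases a <;> cases b <;> simp [bside] at h ⊢ <;> decide
    rw [Walk.length_cons]
    push_cast
    rw [ih]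
    have : bside a = bside b + 1 := by
      have := hab
      cases a <;> cases b <;> simp [bside] at this ⊢ <;> decide
    rw [this]; ring

private lemma length_eq_one_of_edge {V : Type*} {G : SimpleGraph V} {x y : V}
    (p : G.Walk x y) (hp : p.support.Nodup) (he : s(x, y) ∈ p.edges) : p.length = 1 := by
  cases p with
  | nil => simp at he
  | cons hadj q =>
    rename_i m
    rw [Walk.edges_cons, List.mem_cons] at he
    rw [Walk.support_cons, List.nodup_cons] at hp
    rcases he with he | he
    · rw [Sym2.eq_iff] at he
      rcases he with ⟨-, rfl⟩ | ⟨rfl, rfl⟩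
      · have hq : q = Walk.nil := by
          have hqp : q.IsPath := Walk.IsPath.mk' hp.2
          rwa [Walk.isPath_iff_eq_nil] at hqp
        subst hq; simp
      · exact absurd hadj (G.loopless.irrefl _)
    · exact absurd (q.fst_mem_support_of_mem_edges he) hp.1

private lemma exists_edge_of_mem_support {V : Type*} {G : SimpleGraph V} {x y u : V}
    (p : G.Walk x y) (hlen : 0 < p.length) (hu : u ∈ p.support) : ∃ e ∈ p.edges, u ∈ e := by
  induction p with
  | nil => simp at hlen
  | @cons a m c h q ih =>
    rw [Walk.support_cons, List.mem_cons] at hu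
    rcases hu with rfl | hu
    · exact ⟨s(u, m), by simp, by simp⟩
    · cases q with
      | nil =>
        simp only [Walk.support_nil, List.mem_singleton] at hu
        subst hu
        exact ⟨s(a, u), by simp, by simp⟩
      | cons h' q' =>
        obtain ⟨e, he, hue⟩ := ih (by simp) hu
        exact ⟨e, List.mem_cons_of_mem _ he, hue⟩

private lemma circVerts_walkEdges {V : Type*} {G : SimpleGraph V} {v : V}
    (w : G.Walk v v) (hw : w.IsCycle) : circVerts (walkEdges w) = {u | u ∈ w.support} := by
  ext u
  simp only [circVerts, walkEdges, Set.mem_setOf_eq]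
  constructor
  · rintro ⟨e, he, hue⟩
    induction e with
    | _ a b =>
      rw [Sym2.mem_iff] at hue
      rcases hue with rfl | rfl
      · exact w.fst_mem_support_of_mem_edges he
      · exact w.snd_mem_support_of_mem_edges he
  · intro hu
    exact exists_edge_of_mem_support w (by have := hw.three_le_length; omega) hu

private lemma ncard_circVerts {V : Type*} {G : SimpleGraph V} {v : V}
    (w : G.Walk v v) (hw : w.IsCycle) : (circVerts (walkEdges w)).ncard = w.length := by
  classical
  rw [circVerts_walkEdges w hw]
  cases w with
  | nil => exact absurd rfl hw.ne_nil
  | cons h q =>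
    have hnd : q.support.Nodup := by simpa using hw.support_nodup
    have hset : {u | u ∈ (Walk.cons h q).support} = ↑q.support.toFinset := by
      ext u
      simp only [Walk.support_cons, List.mem_cons, List.coe_toFinset, Set.mem_setOf_eq]
      constructor
      · rintro (rfl | hu)
        · exact q.end_mem_support
        · exact hu
      · exact Or.inr
    rw [hset, Set.ncard_coe_finset, List.toFinset_card_of_nodup hnd,
      Walk.length_support, Walk.length_cons]

end Helpers


/-- in a biased graph on a complete bipartite graph, if every circuit with
exactly 4 vertices is balanced then every circuit is balanced. -/
theorem statement17 {α β : Type} (B : Set (Set (Sym2 (α ⊕ β))))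
    (hB : IsBiased (completeBipartiteGraph α β) B)
    (h4 : ∀ C, IsCircuit (completeBipartiteGraph α β) C → (circVerts C).ncard = 4 → C ∈ B) :
    ∀ C, IsCircuit (completeBipartiteGraph α β) C → C ∈ B := by
  classical
  obtain ⟨-, hTheta⟩ := hB
  suffices H : ∀ (n : ℕ) (v : α ⊕ β) (w : (completeBipartiteGraph α β).Walk v v),
      w.IsCycle → w.length = n → walkEdges w ∈ B by
    rintro C ⟨v, w, hw, rfl⟩
    exact H w.length v w hw rfl
  intro n
  induction n using Nat.strong_induction_on with
  | _ n ih =>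
  intro v w hw hlen
  have h3 : 3 ≤ w.length := hw.three_le_length
  have heven : w.length % 2 = 0 := by
    have hp := parity_walk w
    rw [CharTwo.add_self_eq_zero] at hp
    have := (ZMod.natCast_eq_zero_iff w.length 2).mp hp
    omega
  by_cases hl4 : w.length = 4
  · refine h4 _ ⟨v, w, hw, rfl⟩ ?_
    rw [ncard_circVerts w hw, hl4]
  have h6 : 6 ≤ w.length := by omega
  cases w with
  | nil => simp at h3
  | @cons _ v₁ _ h₁ w₁ =>
    cases w₁ with
    | nil => simp at h6
    | @cons _ v₂ _ h₂ w₂ =>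
      cases w₂ with
      | nil => simp at h6
      | @cons _ v₃ _ h₃ rest =>
        -- basic facts
        have hrlen : 3 ≤ rest.length := by
          simp only [Walk.length_cons] at h6; omega
        have hlen' : rest.length + 3 = n := by
          simp only [Walk.length_cons] at hlen; omega
        have hsupnd : (v₁ :: v₂ :: rest.support).Nodup := by
          simpa using hw.support_nodup
        have hednd : (s(v, v₁) :: s(v₁, v₂) :: s(v₂, v₃) :: rest.edges).Nodup := by
          simpa using hw.edges_nodup
        rw [List.nodup_cons, List.nodup_cons] at hsupnd
        obtain ⟨hv₁n, hv₂n, hrestnd⟩ := hsupnd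
        have hvrest : v ∈ rest.support := rest.end_mem_support
        have hv₃rest : v₃ ∈ rest.support := rest.start_mem_support
        have hne_v_v₁ : v ≠ v₁ := by
          intro h; subst h; exact hv₁n (List.mem_cons_of_mem _ hvrest)
        have hne_v_v₂ : v ≠ v₂ := by
          intro h; subst h; exact hv₂n hvrest
        have hne_v₁_v₂ : v₁ ≠ v₂ := by
          intro h; exact hv₁n (h ▸ (List.mem_cons_self (a := v₂) (l := rest.support)))
        have hne_v₁_v₃ : v₁ ≠ v₃ := by
          intro h; subst h; exact hv₁n (List.mem_cons_of_mem _ hv₃rest)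
        have hne_v₂_v₃ : v₂ ≠ v₃ := by
          intro h; subst h; exact hv₂n hv₃rest
        have hrestpath : rest.IsPath := Walk.IsPath.mk' hrestnd
        have hne_v_v₃ : v ≠ v₃ := by
          intro h
          subst h
          rw [Walk.isPath_iff_eq_nil] at hrestpath
          subst hrestpath
          simp at hrlen
        -- the chord is an edge
        have hadj : (completeBipartiteGraph α β).Adj v v₃ := by
          apply adj_of_bside
          have hp := parity_walk (Walk.cons h₁ (Walk.cons h₂ (Walk.cons h₃
            (Walk.nil : (completeBipartiteGraph α β).Walk v₃ v₃))))
          simp only [Walk.length_cons, Walk.length_nil] at hp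
          rw [show ((0 + 1 + 1 + 1 : ℕ) : ZMod 2) = 1 by decide] at hp
          exact hp.symm
        set p₁ : (completeBipartiteGraph α β).Walk v v₃ :=
          Walk.cons h₁ (Walk.cons h₂ (Walk.cons h₃ Walk.nil)) with hp₁
        set p₂ : (completeBipartiteGraph α β).Walk v v₃ := Walk.cons hadj Walk.nil with hp₂
        set p₃ : (completeBipartiteGraph α β).Walk v v₃ := rest.reverse with hp₃
        have hrestedges : s(v, v₃) ∉ rest.edges := by
          intro hmem
          have : rest.length = 1 :=
            length_eq_one_of_edge rest hrestnd (by rwa [Sym2.eq_swap])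
          omega
        have hconf : IsThetaConfig (completeBipartiteGraph α β) p₁ p₂ p₃ := by
          refine ⟨hne_v_v₃, ?_, ?_, ?_, ?_, ?_, ?_, ?_, ?_, ?_⟩
          · rw [Walk.isPath_def, hp₁]
            simp [hne_v_v₁, hne_v_v₂, hne_v_v₃, hne_v₁_v₂, hne_v₁_v₃, hne_v₂_v₃]
          · rw [Walk.isPath_def, hp₂]
            simp [hne_v_v₃]
          · exact hrestpath.reverse
          · intro e he
            rw [hp₁] at he
            rw [hp₂]
            simp only [Walk.edges_cons, Walk.edges_nil, List.mem_cons,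
              List.not_mem_nil, or_false, List.mem_singleton] at he ⊢
            rcases he with rfl | rfl | rfl <;>
              simp [Sym2.eq_iff, hne_v_v₁, hne_v_v₂, hne_v_v₃, hne_v₁_v₂, hne_v₁_v₃,
                hne_v₂_v₃, hne_v_v₁.symm, hne_v_v₂.symm, hne_v_v₃.symm, hne_v₁_v₂.symm,
                hne_v₁_v₃.symm, hne_v₂_v₃.symm]
          · intro e he
            rw [hp₁] at he
            rw [hp₃]
            simp only [Walk.edges_cons, Walk.edges_nil, List.mem_cons,
              List.not_mem_nil, or_false] at he
            rw [Walk.edges_reverse, List.mem_reverse]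
            rw [List.nodup_cons, List.nodup_cons, List.nodup_cons] at hednd
            simp only [List.mem_cons] at hednd
            rcases he with rfl | rfl | rfl <;> tauto
          · intro e he
            rw [hp₂] at he
            rw [hp₃]
            simp only [Walk.edges_cons, Walk.edges_nil, List.mem_cons,
              List.not_mem_nil, or_false] at he
            rw [Walk.edges_reverse, List.mem_reverse]
            subst he
            exact hrestedges
          · intro u hu₁ hu₂
            rw [hp₂] at hu₂
            simpa using hu₂
          · intro u hu₁ hu₃
            rw [hp₁] at hu₁
            rw [hp₃, Walk.support_reverse, List.mem_reverse] at hu₃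
            simp only [Walk.support_cons, Walk.support_nil, List.mem_cons,
              List.not_mem_nil, or_false, List.mem_singleton] at hu₁
            rcases hu₁ with rfl | rfl | rfl | rfl
            · exact Or.inl rfl
            · exact absurd (List.mem_cons_of_mem _ hu₃) hv₁n
            · exact absurd hu₃ hv₂n
            · exact Or.inr rfl
          · intro u hu₂ hu₃
            rw [hp₂] at hu₂
            simpa using hu₂
        -- the 4-cycle
        set c4 : (completeBipartiteGraph α β).Walk v v :=
          Walk.cons h₁ (Walk.cons h₂ (Walk.cons h₃ (Walk.cons hadj.symm Walk.nil))) with hc4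
        have hc4cyc : c4.IsCycle := by
          rw [Walk.isCycle_def]
          refine ⟨?_, by simp [hc4], ?_⟩
          · rw [Walk.isTrail_def, hc4]
            simp only [Walk.edges_cons, Walk.edges_nil, List.nodup_cons, List.mem_cons,
              List.not_mem_nil, or_false, List.nodup_nil, and_true, not_or,
              List.mem_singleton]
            refine ⟨⟨?_, ?_, ?_⟩, ⟨?_, ?_⟩, ?_⟩ <;>
              simp [Sym2.eq_iff, hne_v_v₁, hne_v_v₂, hne_v_v₃, hne_v₁_v₂, hne_v₁_v₃,
                hne_v₂_v₃, hne_v_v₁.symm, hne_v_v₂.symm, hne_v_v₃.symm, hne_v₁_v₂.symm,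
                hne_v₁_v₃.symm, hne_v₂_v₃.symm]
          · rw [hc4]
            simp [hne_v_v₁, hne_v_v₂, hne_v_v₃, hne_v₁_v₂, hne_v₁_v₃, hne_v₂_v₃,
              hne_v_v₁.symm, hne_v_v₂.symm, hne_v_v₃.symm, hne_v₁_v₂.symm,
              hne_v₁_v₃.symm, hne_v₂_v₃.symm]
        have h12 : walkEdges p₁ ∪ walkEdges p₂ ∈ B := by
          have heq : walkEdges c4 = walkEdges p₁ ∪ walkEdges p₂ := by
            ext e
            rw [hc4, hp₁, hp₂]
            simp only [walkEdges, Walk.edges_cons, Walk.edges_nil, Set.mem_union,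
              Set.mem_setOf_eq, List.mem_cons, List.not_mem_nil, or_false,
              List.mem_singleton]
            rw [show s(v₃, v) = s(v, v₃) from Sym2.eq_swap]
            tauto
          rw [← heq]
          refine h4 _ ⟨v, c4, hc4cyc, rfl⟩ ?_
          rw [ncard_circVerts c4 hc4cyc, hc4]
          simp
        have h23 : walkEdges p₂ ∪ walkEdges p₃ ∈ B := by
          have hc'cyc : (Walk.cons hadj rest).IsCycle := by
            rw [Walk.isCycle_def]
            refine ⟨?_, by simp, ?_⟩
            · rw [Walk.isTrail_def]
              simp only [Walk.edges_cons, List.nodup_cons]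
              exact ⟨hrestedges, hrestpath.edges_nodup⟩
            · simpa using hrestnd
          have hmem := ih (rest.length + 1) (by omega) v (Walk.cons hadj rest) hc'cyc
            (by simp)
          have heq : walkEdges (Walk.cons hadj rest) = walkEdges p₂ ∪ walkEdges p₃ := by
            ext e
            rw [hp₂, hp₃]
            simp only [walkEdges, Walk.edges_cons, Walk.edges_nil, Set.mem_union,
              Set.mem_setOf_eq, List.mem_cons, List.not_mem_nil, or_false,
              Walk.edges_reverse, List.mem_reverse, List.mem_singleton]
          rw [← heq]
          exact hmem
        have h13 : walkEdges p₁ ∪ walkEdges p₃ ∈ B := by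
          by_contra hc
          exact hTheta p₁ p₂ p₃ hconf (Or.inr (Or.inl ⟨h12, hc, h23⟩))
        have heq : walkEdges (Walk.cons h₁ (Walk.cons h₂ (Walk.cons h₃ rest))) =
            walkEdges p₁ ∪ walkEdges p₃ := by
          ext e
          rw [hp₁, hp₃]
          simp only [walkEdges, Walk.edges_cons, Walk.edges_nil, Set.mem_union,
            Set.mem_setOf_eq, List.mem_cons, List.not_mem_nil, or_false,
            Walk.edges_reverse, List.mem_reverse]
          tauto
        rw [heq]
        exact h13

end Paper
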